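/- Let n ≥ 1, p ∈ (0,∞) with p ≠ 2, and let P, Q ∈ M_{2n}(ℂ) be projections with τ(P) = τ(Q) = 1/2 (τ the normalized trace on M_{2n}(ℂ)). Then ‖P − Q‖_p = ‖(I − P) − Q‖_p = 1/√2 if and only if there exists a partial isometry U ∈ M_{2n}(ℂ) with UᴴU = P, UUᴴ = I − P and Q = (I + U + Uᴴ)/2. -/

import Mathlib

open Matrix
open scoped ComplexOrder

/-- The normalized trace `L^p`-(quasi-)norm `(τ(|A|^p))^{1/p}` of a complex matrix,
computed via the eigenvalues of `Aᴴ * A`: the eigenvalues of `|A|^p` are the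
`(p/2)`-th powers of those of `Aᴴ * A`, and the trace of a Hermitian matrix is the
sum of its eigenvalues. -/
noncomputable def lpnorm {m : Type*} [Fintype m] [DecidableEq m] (p : ℝ)
    (A : Matrix m m ℂ) : ℝ :=
  ((∑ i, ((Matrix.posSemidef_conjTranspose_mul_self A).isHermitian.eigenvalues i) ^ (p / 2)) /
      (Fintype.card m : ℝ)) ^ (1 / p)

/-- The `ℓ² → ℓ²` operator norm of a complex matrix. -/
noncomputable def l2opNorm {m : Type*} [Fintype m] [DecidableEq m]
    (A : Matrix m m ℂ) : ℝ :=
  ‖Matrix.toEuclideanCLM (𝕜 := ℂ) A‖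

/- ## Auxiliary lemmas -/

section Aux

/-- Tangent-line (Bernoulli) inequality for `rpow`, convex case, strict. -/
lemma aux_tangent_lt {q y : ℝ} (hq : 1 < q) (hy : 0 ≤ y) (hne : y ≠ 1/2) :
    (1/2 : ℝ) ^ q * (1 + q * (2*y - 1)) < y ^ q := by
  have hs : (-1 : ℝ) ≤ 2*y - 1 := by linarith
  have hs' : 2*y - 1 ≠ 0 := fun h => hne (by linarith [h])
  have hb := one_add_mul_self_lt_rpow_one_add hs hs' hq
  have hy' : y ^ q = (1 + (2*y-1)) ^ q * (1/2 : ℝ) ^ q := by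
    rw [← Real.mul_rpow (by linarith) (by norm_num)]
    congr 1; ring
  have hcpos : (0:ℝ) < (1/2 : ℝ) ^ q := Real.rpow_pos_of_pos (by norm_num) _
  rw [hy', mul_comm ((1 + (2*y-1)) ^ q)]
  exact mul_lt_mul_of_pos_left hb hcpos

/-- Tangent-line (Bernoulli) inequality for `rpow`, convex case. -/
lemma aux_tangent_le {q y : ℝ} (hq : 1 < q) (hy : 0 ≤ y) :
    (1/2 : ℝ) ^ q * (1 + q * (2*y - 1)) ≤ y ^ q := by
  by_cases hne : y = 1/2
  · subst hne; norm_num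
  · exact (aux_tangent_lt hq hy hne).le

/-- Tangent-line (Bernoulli) inequality for `rpow`, concave case, strict. -/
lemma aux_tangent_lt' {q y : ℝ} (hq0 : 0 < q) (hq : q < 1) (hy : 0 ≤ y) (hne : y ≠ 1/2) :
    y ^ q < (1/2 : ℝ) ^ q * (1 + q * (2*y - 1)) := by
  have hs : (-1 : ℝ) ≤ 2*y - 1 := by linarith
  have hs' : 2*y - 1 ≠ 0 := fun h => hne (by linarith [h])
  have hb := rpow_one_add_lt_one_add_mul_self hs hs' hq0 hq
  have hy' : y ^ q = (1 + (2*y-1)) ^ q * (1/2 : ℝ) ^ q := by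
    rw [← Real.mul_rpow (by linarith) (by norm_num)]
    congr 1; ring
  have hcpos : (0:ℝ) < (1/2 : ℝ) ^ q := Real.rpow_pos_of_pos (by norm_num) _
  rw [hy', mul_comm ((1 + (2*y-1)) ^ q)]
  exact mul_lt_mul_of_pos_left hb hcpos

/-- Tangent-line (Bernoulli) inequality for `rpow`, concave case. -/
lemma aux_tangent_le' {q y : ℝ} (hq0 : 0 < q) (hq : q < 1) (hy : 0 ≤ y) :
    y ^ q ≤ (1/2 : ℝ) ^ q * (1 + q * (2*y - 1)) := by
  by_cases hne : y = 1/2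
  · subst hne; norm_num
  · exact (aux_tangent_lt' hq0 hq hy hne).le

/-- Jensen equality: a nonnegative tuple with mean `1/2` whose `q`-th powers have mean
`(1/2)^q` (for `q ≠ 1`) is constant, equal to `1/2`. -/
lemma aux_jensen {ι : Type*} [Fintype ι] {q : ℝ} (hq0 : 0 < q) (hq1 : q ≠ 1)
    {x : ι → ℝ} (hx : ∀ i, 0 ≤ x i)
    (hs : ∑ i, x i = (Fintype.card ι : ℝ) / 2)
    (hsq : ∑ i, x i ^ q = (Fintype.card ι : ℝ) * (1/2 : ℝ) ^ q)
    (i0 : ι) : x i0 = 1/2 := by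
  by_contra hne
  have htan_sum : ∑ i, (1/2 : ℝ) ^ q * (1 + q * (2 * x i - 1))
      = (Fintype.card ι : ℝ) * (1/2 : ℝ) ^ q := by
    rw [← Finset.mul_sum]
    have h1 : ∑ i, (1 + q * (2 * x i - 1)) = ∑ i, ((2*q) * x i + (1 - q)) :=
      Finset.sum_congr rfl fun i _ => by ring
    rw [h1, Finset.sum_add_distrib, ← Finset.mul_sum, hs, Finset.sum_const, nsmul_eq_mul,
      Finset.card_univ]
    ring
  rcases lt_or_gt_of_ne hq1 with hq | hq
  · -- concave case : x ^ q < tangent at i0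
    have hlt : ∑ i, x i ^ q < ∑ i, (1/2 : ℝ) ^ q * (1 + q * (2 * x i - 1)) :=
      Finset.sum_lt_sum (fun i _ => aux_tangent_le' hq0 hq (hx i))
        ⟨i0, Finset.mem_univ _, aux_tangent_lt' hq0 hq (hx i0) hne⟩
    rw [hsq, htan_sum] at hlt
    exact lt_irrefl _ hlt
  · have hlt : ∑ i, (1/2 : ℝ) ^ q * (1 + q * (2 * x i - 1)) < ∑ i, x i ^ q :=
      Finset.sum_lt_sum (fun i _ => aux_tangent_le hq (hx i))
        ⟨i0, Finset.mem_univ _, aux_tangent_lt hq (hx i0) hne⟩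
    rw [hsq, htan_sum] at hlt
    exact lt_irrefl _ hlt

/-- The trace of a Hermitian matrix is the sum of its eigenvalues. -/
lemma aux_trace_eq_sum_eig {m : Type*} [Fintype m] [DecidableEq m] {A : Matrix m m ℂ}
    (hA : A.IsHermitian) : A.trace = ∑ i, (hA.eigenvalues i : ℂ) := by
  conv_lhs => rw [hA.spectral_theorem]
  simp only [Unitary.conjStarAlgAut_apply, Unitary.coe_star]
  rw [Matrix.trace_mul_cycle,
    (Matrix.mem_unitaryGroup_iff').mp (hA.eigenvectorUnitary).2, Matrix.one_mul,
    Matrix.trace_diagonal]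
  rfl

/-- The eigenvalues of a real scalar matrix. -/
lemma aux_eig_smul_one {m : Type*} [Fintype m] [DecidableEq m] {c : ℝ} {A : Matrix m m ℂ}
    (hA : A.IsHermitian) (h : A = (c : ℂ) • 1) (i : m) : hA.eigenvalues i = c := by
  suffices H : ∀ (t : ℝ) (v : m → ℂ), v ≠ 0 → A *ᵥ v = t • v → t = c by
    refine H _ _ ?_ (hA.mulVec_eigenvectorBasis i)
    intro h0
    apply hA.eigenvectorBasis.orthonormal.ne_zero i
    ext j
    exact congrFun h0 j
  intro t v hvnz hv
  rw [h] at hv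
  obtain ⟨j, hj⟩ := Function.ne_iff.mp hvnz
  have hj' := congrFun hv j
  simp only [Matrix.smul_mulVec, Matrix.one_mulVec, Pi.smul_apply, smul_eq_mul,
    Complex.real_smul] at hj'
  have hce : (t : ℂ) = (c : ℂ) := mul_right_cancel₀ hj hj'.symm
  exact_mod_cast hce

lemma aux_sqrt : (1/2 : ℝ) ^ ((1:ℝ)/2) = 1 / Real.sqrt 2 := by
  rw [← Real.sqrt_eq_rpow, one_div, Real.sqrt_inv, ← one_div]

/-- Halving identity in a complex module. -/
lemma aux_half_add {M : Type*} [AddCommGroup M] [Module ℂ M] (X : M) :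
    (2 : ℂ)⁻¹ • (X + X) = X := by
  rw [smul_add, ← add_smul]
  norm_num

lemma aux_halves {M : Type*} [AddCommGroup M] [Module ℂ M] (X : M) :
    (2 : ℂ)⁻¹ • X + (2 : ℂ)⁻¹ • X = X := by
  rw [← smul_add]
  exact aux_half_add X

/-- `lpnorm p A = 1/√2` when `Aᴴ * A = (1/2) • 1`. -/
lemma aux_lpnorm_of_half {m : Type*} [Fintype m] [DecidableEq m]
    (hm : 0 < Fintype.card m) {p : ℝ} (hp : 0 < p) {A : Matrix m m ℂ}
    (h : Aᴴ * A = (2 : ℂ)⁻¹ • 1) : lpnorm p A = 1 / Real.sqrt 2 := by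
  have hc : Aᴴ * A = (((1/2 : ℝ)) : ℂ) • 1 := by rw [h]; norm_num
  have heig : ∀ i, (Matrix.posSemidef_conjTranspose_mul_self A).isHermitian.eigenvalues i
      = 1/2 := fun i => aux_eig_smul_one _ hc i
  unfold lpnorm
  rw [Finset.sum_congr rfl (fun i _ => by rw [heig i]), Finset.sum_const,
    Finset.card_univ, nsmul_eq_mul]
  have hcard : (Fintype.card m : ℝ) ≠ 0 := by positivity
  rw [mul_comm, mul_div_assoc, div_self hcard, mul_one,
    ← Real.rpow_mul (by norm_num : (0:ℝ) ≤ 1/2)]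
  have hhalf : p / 2 * (1 / p) = (1:ℝ)/2 := by field_simp
  rw [hhalf]
  exact aux_sqrt

/-- Conversely, extract the eigenvalue power sum from `lpnorm p A = 1/√2`. -/
lemma aux_sum_of_lpnorm {m : Type*} [Fintype m] [DecidableEq m]
    (hm : 0 < Fintype.card m) {p : ℝ} (hp : 0 < p) {A : Matrix m m ℂ}
    (h : lpnorm p A = 1 / Real.sqrt 2) :
    ∑ i, (Matrix.posSemidef_conjTranspose_mul_self A).isHermitian.eigenvalues i ^ (p/2)
      = (Fintype.card m : ℝ) * (1/2 : ℝ) ^ (p/2) := by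
  set S := ∑ i, (Matrix.posSemidef_conjTranspose_mul_self A).isHermitian.eigenvalues i ^ (p/2)
    with hSdef
  have hS0 : 0 ≤ S := Finset.sum_nonneg fun i _ =>
    Real.rpow_nonneg ((Matrix.posSemidef_conjTranspose_mul_self A).eigenvalues_nonneg i) _
  have hcard : (0:ℝ) < (Fintype.card m : ℝ) := by exact_mod_cast hm
  unfold lpnorm at h
  rw [← hSdef] at h
  have hsqrt : (1 : ℝ) / Real.sqrt 2 = (1/2 : ℝ) ^ ((1:ℝ)/2) := aux_sqrt.symm
  have h1 : ((S / (Fintype.card m : ℝ)) ^ (1/p)) ^ p = ((1/2 : ℝ) ^ ((1:ℝ)/2)) ^ p := by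
    rw [h, hsqrt]
  rw [← Real.rpow_mul (div_nonneg hS0 hcard.le),
    ← Real.rpow_mul (by norm_num : (0:ℝ) ≤ 1/2), one_div, inv_mul_cancel₀ hp.ne',
    Real.rpow_one, show (1:ℝ)/2 * p = p/2 by ring] at h1
  rw [div_eq_iff hcard.ne'] at h1
  rw [h1]
  ring

end Aux

/-- For `p ≠ 2` and trace-`1/2` projections `P, Q ∈ M_{2n}(ℂ)`:
`‖P − Q‖_p = ‖(I − P) − Q‖_p = 1/√2` iff there is a partial isometry `U` with
`UᴴU = P`, `UUᴴ = I − P` and `Q = (I + U + Uᴴ)/2`. -/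
theorem stmt14 (n : ℕ) (hn : 1 ≤ n) (p : ℝ) (hp : 0 < p) (hp2 : p ≠ 2)
    (P Q : Matrix (Fin (2 * n)) (Fin (2 * n)) ℂ)
    (hP : Pᴴ = P) (hP2 : P * P = P) (hPtr : P.trace = (n : ℂ))
    (hQ : Qᴴ = Q) (hQ2 : Q * Q = Q) (hQtr : Q.trace = (n : ℂ)) :
    (lpnorm p (P - Q) = 1 / Real.sqrt 2 ∧ lpnorm p ((1 - P) - Q) = 1 / Real.sqrt 2) ↔
      ∃ U : Matrix (Fin (2 * n)) (Fin (2 * n)) ℂ,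
        Uᴴ * U = P ∧ U * Uᴴ = 1 - P ∧ Q = (2 : ℂ)⁻¹ • (1 + U + Uᴴ) := by
  have hcard : 0 < Fintype.card (Fin (2 * n)) := by
    rw [Fintype.card_fin]; omega
  have hAc : (P - Q)ᴴ = P - Q := by rw [conjTranspose_sub, hP, hQ]
  have hBc : ((1 - P) - Q)ᴴ = (1 - P) - Q := by
    rw [conjTranspose_sub, conjTranspose_sub, conjTranspose_one, hP, hQ]
  have c2 : (2:ℂ)⁻¹ • (1 : Matrix (Fin (2*n)) (Fin (2*n)) ℂ) + (2:ℂ)⁻¹ • 1 = 1 :=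
    aux_halves 1
  constructor
  · rintro ⟨h1, h2⟩
    set lamA := (Matrix.posSemidef_conjTranspose_mul_self (P - Q)).isHermitian.eigenvalues
      with hlamA
    set lamB := (Matrix.posSemidef_conjTranspose_mul_self ((1 - P) - Q)).isHermitian.eigenvalues
      with hlamB
    have s1 := aux_sum_of_lpnorm hcard hp h1
    have s2 := aux_sum_of_lpnorm hcard hp h2
    have hABsum : (P - Q)ᴴ * (P - Q) + ((1 - P) - Q)ᴴ * ((1 - P) - Q) = 1 := by
      rw [hAc, hBc]
      simp only [mul_sub, sub_mul, mul_one, one_mul, hP2, hQ2]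
      abel
    -- trace identity, hence the eigenvalue sums
    have t1 := aux_trace_eq_sum_eig (Matrix.posSemidef_conjTranspose_mul_self (P - Q)).isHermitian
    have t2 := aux_trace_eq_sum_eig
      (Matrix.posSemidef_conjTranspose_mul_self ((1 - P) - Q)).isHermitian
    have htr : ((∑ i, lamA i + ∑ i, lamB i : ℝ) : ℂ) = ((Fintype.card (Fin (2*n)) : ℝ) : ℂ) := by
      rw [hlamA, hlamB]
      push_cast
      rw [← t1, ← t2, ← Matrix.trace_add, hABsum, Matrix.trace_one]
    have htrR : ∑ i, lamA i + ∑ i, lamB i = (Fintype.card (Fin (2*n)) : ℝ) :=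
      Complex.ofReal_injective htr
    -- Jensen equality on the combined family
    have hq0 : 0 < p / 2 := by positivity
    have hq1 : p / 2 ≠ 1 := fun h => hp2 (by linarith)
    set x : Fin (2*n) ⊕ Fin (2*n) → ℝ := Sum.elim lamA lamB with hx
    have hxnn : ∀ i, 0 ≤ x i := by
      rintro (i | i)
      · exact (Matrix.posSemidef_conjTranspose_mul_self (P - Q)).eigenvalues_nonneg i
      · exact (Matrix.posSemidef_conjTranspose_mul_self ((1 - P) - Q)).eigenvalues_nonneg i
    have hxs : ∑ i, x i = (Fintype.card (Fin (2*n) ⊕ Fin (2*n)) : ℝ) / 2 := by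
      rw [Fintype.sum_sum_type]
      simp only [hx, Sum.elim_inl, Sum.elim_inr]
      rw [htrR, Fintype.card_sum]
      push_cast
      ring
    have hxsq : ∑ i, x i ^ (p/2) = (Fintype.card (Fin (2*n) ⊕ Fin (2*n)) : ℝ) * (1/2:ℝ) ^ (p/2) := by
      rw [Fintype.sum_sum_type]
      simp only [hx, Sum.elim_inl, Sum.elim_inr]
      rw [hlamA, hlamB, s1, s2, Fintype.card_sum]
      push_cast
      ring
    have heigA : ∀ i, lamA i = 1/2 := by
      intro i
      have h := aux_jensen hq0 hq1 hxnn hxs hxsq (Sum.inl i)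
      rwa [hx, Sum.elim_inl] at h
    -- hence (P-Q)ᴴ(P-Q) = (1/2) • 1
    have hdiag : Matrix.diagonal (RCLike.ofReal ∘ lamA) =
        ((2:ℂ)⁻¹ • 1 : Matrix (Fin (2*n)) (Fin (2*n)) ℂ) := by
      have hfun : (RCLike.ofReal ∘ lamA : Fin (2*n) → ℂ) = fun _ => (2:ℂ)⁻¹ := by
        funext i
        simp only [Function.comp_apply, heigA i]
        norm_num
      rw [hfun]
      ext i j
      by_cases hij : i = j <;> simp [Matrix.diagonal_apply, Matrix.one_apply, hij]
    have hMeq : (P - Q)ᴴ * (P - Q) = (2:ℂ)⁻¹ • 1 := by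
      have hst := (Matrix.posSemidef_conjTranspose_mul_self (P - Q)).isHermitian.spectral_theorem
      rw [← hlamA, hdiag] at hst
      rw [hst]
      simp only [Unitary.conjStarAlgAut_apply, Unitary.coe_star]
      rw [Matrix.mul_smul, Matrix.mul_one, Matrix.smul_mul,
        (Matrix.mem_unitaryGroup_iff).mp
          ((Matrix.posSemidef_conjTranspose_mul_self (P - Q)).isHermitian.eigenvectorUnitary).2]
    have hsqA : (P - Q) * (P - Q) = (2:ℂ)⁻¹ • 1 := by
      rw [hAc] at hMeq
      exact hMeq
    have keyhalf : P * Q + Q * P = P + Q - (2:ℂ)⁻¹ • 1 := by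
      have e : P * Q + Q * P = P + Q - (P - Q) * (P - Q) := by
        simp only [mul_sub, sub_mul, hP2, hQ2]
        abel
      rw [e, hsqA]
    have key2 : (P * Q + Q * P) + (P * Q + Q * P) = P + P + Q + Q - 1 := by
      have e : (P * Q + Q * P) + (P * Q + Q * P) =
          (P + P + Q + Q) - ((P - Q) * (P - Q) + (P - Q) * (P - Q)) := by
        simp only [mul_sub, sub_mul, hP2, hQ2]
        abel
      rw [e, hsqA, c2]
    have hQPQ : Q * P * Q = (2:ℂ)⁻¹ • Q := by
      have h3 := congrArg (fun X => Q * X) keyhalf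
      simp only [mul_add, mul_sub, Matrix.mul_smul, mul_one, ← mul_assoc, hQ2] at h3
      -- h3 : Q*P*Q + Q*P = Q*P + Q - 2⁻¹ • Q
      have h4 : Q * P * Q = Q - (2:ℂ)⁻¹ • Q := by
        calc Q * P * Q = (Q * P * Q + Q * P) - Q * P := by abel
        _ = (Q * P + Q - (2:ℂ)⁻¹ • Q) - Q * P := by rw [h3]
        _ = Q - (2:ℂ)⁻¹ • Q := by abel
      rw [h4]
      nth_rewrite 1 [← aux_halves Q]
      abel
    have hUconj : ((Q + Q - 1) * P)ᴴ = P * (Q + Q - 1) := by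
      rw [conjTranspose_mul, conjTranspose_sub, conjTranspose_add, conjTranspose_one, hP, hQ]
    refine ⟨(Q + Q - 1) * P, ?_, ?_, ?_⟩
    · rw [hUconj]
      have hQQ1 : (Q + Q - 1) * (Q + Q - 1) = 1 := by
        simp only [mul_sub, sub_mul, add_mul, mul_add, mul_one, one_mul, hQ2]
        abel
      have e : P * (Q + Q - 1) * ((Q + Q - 1) * P) = P * ((Q + Q - 1) * (Q + Q - 1)) * P := by
        noncomm_ring
      rw [e, hQQ1, mul_one, hP2]
    · rw [hUconj]
      have e2a : (Q + Q - 1) * P * (P * (Q + Q - 1)) = (Q + Q - 1) * (P * P) * (Q + Q - 1) := by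
        noncomm_ring
      rw [e2a, hP2]
      have e2b : (Q + Q - 1) * P * (Q + Q - 1) =
          (Q * P * Q + Q * P * Q + Q * P * Q + Q * P * Q)
            - ((P * Q + Q * P) + (P * Q + Q * P)) + P := by
        noncomm_ring
      rw [e2b, key2, hQPQ]
      rw [add_assoc ((2:ℂ)⁻¹ • Q + (2:ℂ)⁻¹ • Q), aux_halves]
      abel
    · rw [hUconj]
      have e4 : (1 : Matrix (Fin (2*n)) (Fin (2*n)) ℂ) + (Q + Q - 1) * P + P * (Q + Q - 1)
          = 1 + ((P * Q + Q * P) + (P * Q + Q * P)) - (P + P) := by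
        noncomm_ring
      rw [e4, key2]
      have e5 : (1 : Matrix (Fin (2*n)) (Fin (2*n)) ℂ) + (P + P + Q + Q - 1) - (P + P)
          = Q + Q := by abel
      rw [e5, aux_half_add]
  · rintro ⟨U, hU1, hU2, hQdef⟩
    -- basic partial isometry identities
    have hUP : U * P = U := by
      have h0 : (U * (1 - P))ᴴ * (U * (1 - P)) = 0 := by
        rw [conjTranspose_mul, conjTranspose_sub, conjTranspose_one, hP]
        have e : (1 - P) * Uᴴ * (U * (1 - P)) = (1 - P) * (Uᴴ * U) * (1 - P) := by
          noncomm_ring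
        rw [e, hU1]
        have e2 : ((1:Matrix (Fin (2*n)) (Fin (2*n)) ℂ) - P) * P = 0 := by
          rw [sub_mul, one_mul, hP2, sub_self]
        rw [e2, zero_mul]
      have h3 := Matrix.conjTranspose_mul_self_eq_zero.mp h0
      rw [mul_sub, mul_one, sub_eq_zero] at h3
      exact h3.symm
    have hPU : P * U = 0 := by
      have h1 : U * (Uᴴ * U) = (U * Uᴴ) * U := by rw [mul_assoc]
      rw [hU1, hU2, hUP, sub_mul, one_mul] at h1
      exact sub_eq_self.mp h1.symm
    have hPUc : P * Uᴴ = Uᴴ := by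
      have : P * Uᴴ = (U * P)ᴴ := by rw [conjTranspose_mul, hP]
      rw [this, hUP]
    have hUcP : Uᴴ * P = 0 := by
      have : Uᴴ * P = (P * U)ᴴ := by rw [conjTranspose_mul, hP]
      rw [this, hPU, conjTranspose_zero]
    have hQsum : Q + Q = 1 + U + Uᴴ := by
      rw [hQdef, ← smul_add, aux_half_add]
    have e1 : P * (Q + Q) = P + Uᴴ := by
      rw [hQsum, mul_add, mul_add, mul_one, hPU, hPUc, add_zero]
    have e2 : (Q + Q) * P = P + U := by
      rw [hQsum, add_mul, add_mul, one_mul, hUP, hUcP, add_zero]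
    have hdouble : (P - Q) * (P - Q) + (P - Q) * (P - Q) = 1 := by
      have e3 : (P - Q) * (P - Q) + (P - Q) * (P - Q) =
          (P + P + Q + Q) - (P * (Q + Q) + (Q + Q) * P) := by
        simp only [mul_sub, sub_mul, mul_add, add_mul, hP2, hQ2]
        abel
      rw [e3, e1, e2]
      have e6 : P + P + Q + Q - (P + Uᴴ + (P + U)) = (Q + Q) - (U + Uᴴ) := by abel
      rw [e6, hQsum]
      abel
    have hdouble2 : ((1 - P) - Q) * ((1 - P) - Q) + ((1 - P) - Q) * ((1 - P) - Q) = 1 := by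
      have e3 : ((1 - P) - Q) * ((1 - P) - Q) + ((1 - P) - Q) * ((1 - P) - Q) =
          ((1 : Matrix (Fin (2*n)) (Fin (2*n)) ℂ) + 1) - (P + P + Q + Q)
            + (P * (Q + Q) + (Q + Q) * P) := by
        simp only [mul_sub, sub_mul, mul_add, add_mul, mul_one, one_mul, hP2, hQ2]
        abel
      rw [e3, e1, e2]
      have e6 : (1 : Matrix (Fin (2*n)) (Fin (2*n)) ℂ) + 1 - (P + P + Q + Q) + (P + Uᴴ + (P + U))
          = (1 + 1 + U + Uᴴ) - (Q + Q) := by abel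
      rw [e6, hQsum]
      abel
    have half1 : (P - Q)ᴴ * (P - Q) = (2:ℂ)⁻¹ • 1 := by
      rw [hAc, ← aux_half_add ((P - Q) * (P - Q)), hdouble]
    have half2 : ((1 - P) - Q)ᴴ * ((1 - P) - Q) = (2:ℂ)⁻¹ • 1 := by
      rw [hBc, ← aux_half_add (((1 - P) - Q) * ((1 - P) - Q)), hdouble2]
    exact ⟨aux_lpnorm_of_half hcard hp half1, aux_lpnorm_of_half hcard hp half2⟩
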